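/- The set of complex eigenvalues of T is exactly {1} ∪ {2·cos(kπ/N)/z : k = 1, 2, …, N−1}. These N real numbers are pairwise distinct, so T has N distinct real eigenvalues and is diagonalizable over ℝ. -/

import Mathlib

open Real Matrix Finset

/-- The TSAC transition matrix `T` on the diagonal of the computation-qubit density
matrix: `N = 2^n`, `z = e^ε + e^{-ε}`, `T 0 0 = T 0 1 = e^ε/z`,
`T (N-1) (N-2) = T (N-1) (N-1) = e^{-ε}/z`, and for `0 < i < N-1`,
`T i (i-1) = e^{-ε}/z`, `T i (i+1) = e^ε/z`; all other entries vanish. -/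
noncomputable def Tmat (n : ℕ) (ε : ℝ) : Matrix (Fin (2 ^ n)) (Fin (2 ^ n)) ℝ :=
  fun i j =>
    if (i : ℕ) = 0 then
      if (j : ℕ) ≤ 1 then Real.exp ε / (Real.exp ε + Real.exp (-ε)) else 0
    else if (i : ℕ) = 2 ^ n - 1 then
      if 2 ^ n - 2 ≤ (j : ℕ) then Real.exp (-ε) / (Real.exp ε + Real.exp (-ε)) else 0
    else if (j : ℕ) + 1 = (i : ℕ) then Real.exp (-ε) / (Real.exp ε + Real.exp (-ε))
    else if (j : ℕ) = (i : ℕ) + 1 then Real.exp ε / (Real.exp ε + Real.exp (-ε))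
    else 0

noncomputable def tsacLam (n : ℕ) (ε : ℝ) (k : ℕ) : ℝ :=
  if k = 0 then 1 else 2 * Real.cos (k * Real.pi / 2 ^ n) / (Real.exp ε + Real.exp (-ε))

noncomputable def tsacVec (n : ℕ) (ε : ℝ) (k i : ℕ) : ℝ :=
  if k = 0 then Real.exp (-(2 * ε) * i)
  else Real.exp (-ε * i) *
    (Real.sin ((i + 1) * (k * Real.pi / 2 ^ n)) - Real.exp ε * Real.sin (i * (k * Real.pi / 2 ^ n)))

lemma sin_helper (x θ : ℝ) : Real.sin (x + θ) + Real.sin (x - θ) = 2 * Real.sin x * Real.cos θ := by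
  rw [Real.sin_add, Real.sin_sub]; ring

lemma sum_pair_support {N : ℕ} (f : Fin N → ℝ) (a b : Fin N) (hab : a ≠ b)
    (h : ∀ x : Fin N, x ≠ a → x ≠ b → f x = 0) :
    ∑ x, f x = f a + f b := by
  rw [← Finset.sum_pair hab]
  refine (Finset.sum_subset (Finset.subset_univ _) ?_).symm
  intro x _ hx
  simp only [Finset.mem_insert, Finset.mem_singleton] at hx
  push_neg at hx
  exact h x hx.1 hx.2

/-- pointwise row equation -/
lemma tmat_row (n : ℕ) (hn : 1 ≤ n) (ε : ℝ) (u : ℕ → ℝ) (μ : ℝ)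
    (h0 : Real.exp ε * (u 0 + u 1) = μ * ((Real.exp ε + Real.exp (-ε)) * u 0))
    (hmid : ∀ m : ℕ, m + 2 ≤ 2 ^ n - 1 →
      Real.exp (-ε) * u m + Real.exp ε * u (m + 2) =
        μ * ((Real.exp ε + Real.exp (-ε)) * u (m + 1)))
    (htop : Real.exp (-ε) * (u (2 ^ n - 2) + u (2 ^ n - 1)) =
        μ * ((Real.exp ε + Real.exp (-ε)) * u (2 ^ n - 1))) :
    ∀ i : Fin (2 ^ n), (Tmat n ε).mulVec (fun j => u j.val) i = μ * u i.val := by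
  have hN : 2 ≤ 2 ^ n := by
    calc 2 = 2 ^ 1 := rfl
    _ ≤ 2 ^ n := Nat.pow_le_pow_right (by norm_num) hn
  have hz : (0:ℝ) < Real.exp ε + Real.exp (-ε) := by positivity
  intro i
  simp only [Matrix.mulVec, dotProduct]
  rcases eq_or_ne (i : ℕ) 0 with hi0 | hi0
  · rw [sum_pair_support _ (⟨0, by omega⟩ : Fin (2^n)) (⟨1, by omega⟩ : Fin (2^n))
      (by simp [Fin.ext_iff]) ?_]
    · have e1 : Tmat n ε i ⟨0, by omega⟩ = Real.exp ε / (Real.exp ε + Real.exp (-ε)) := by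
        simp only [Tmat, Fin.val_mk]; split_ifs <;> first | rfl | omega
      have e2 : Tmat n ε i ⟨1, by omega⟩ = Real.exp ε / (Real.exp ε + Real.exp (-ε)) := by
        simp only [Tmat, Fin.val_mk]; split_ifs <;> first | rfl | omega
      rw [e1, e2]
      simp only [Fin.val_mk, hi0]
      field_simp
      linear_combination h0
    · intro x hxa hxb
      have hx0 : (x : ℕ) ≠ 0 := fun h => hxa (Fin.ext h)
      have hx1 : (x : ℕ) ≠ 1 := by simpa [Fin.ext_iff] using hxb
      have : Tmat n ε i x = 0 := by
        simp only [Tmat, Fin.val_mk]; split_ifs <;> first | rfl | omega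
      rw [this, zero_mul]
  · rcases eq_or_ne (i : ℕ) (2 ^ n - 1) with hit | hit
    · rw [sum_pair_support _ (⟨2^n - 2, by omega⟩ : Fin (2^n)) (⟨2^n - 1, by omega⟩ : Fin (2^n))
        (by simp [Fin.ext_iff]; omega) ?_]
      · have e1 : Tmat n ε i ⟨2^n - 2, by omega⟩
            = Real.exp (-ε) / (Real.exp ε + Real.exp (-ε)) := by
          simp only [Tmat, Fin.val_mk]; split_ifs <;> first | rfl | omega
        have e2 : Tmat n ε i ⟨2^n - 1, by omega⟩
            = Real.exp (-ε) / (Real.exp ε + Real.exp (-ε)) := by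
          simp only [Tmat, Fin.val_mk]; split_ifs <;> first | rfl | omega
        rw [e1, e2]
        simp only [Fin.val_mk, hit]
        field_simp
        linear_combination htop
      · intro x hxa hxb
        have hx0 : (x : ℕ) ≠ 2^n - 2 := by simpa [Fin.ext_iff] using hxa
        have hx1 : (x : ℕ) ≠ 2^n - 1 := by simpa [Fin.ext_iff] using hxb
        have hxlt : (x : ℕ) < 2^n := x.isLt
        have : Tmat n ε i x = 0 := by
          simp only [Tmat, Fin.val_mk]; split_ifs <;> first | rfl | omega
        rw [this, zero_mul]
    · obtain ⟨m, hm⟩ : ∃ m, (i : ℕ) = m + 1 := ⟨(i : ℕ) - 1, by omega⟩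
      have hilt : (i : ℕ) < 2 ^ n := i.isLt
      have hm2 : m + 2 ≤ 2 ^ n - 1 := by omega
      rw [sum_pair_support _ (⟨m, by omega⟩ : Fin (2^n)) (⟨m + 2, by omega⟩ : Fin (2^n))
        (by simp [Fin.ext_iff]) ?_]
      · have e1 : Tmat n ε i ⟨m, by omega⟩
            = Real.exp (-ε) / (Real.exp ε + Real.exp (-ε)) := by
          simp only [Tmat, Fin.val_mk]; split_ifs <;> first | rfl | omega
        have e2 : Tmat n ε i ⟨m + 2, by omega⟩
            = Real.exp ε / (Real.exp ε + Real.exp (-ε)) := by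
          simp only [Tmat, Fin.val_mk]; split_ifs <;> first | rfl | omega
        rw [e1, e2]
        simp only [Fin.val_mk, hm]
        have := hmid m hm2
        field_simp
        linear_combination this
      · intro x hxa hxb
        have hx0 : (x : ℕ) ≠ m := by simpa [Fin.ext_iff] using hxa
        have hx1 : (x : ℕ) ≠ m + 2 := by simpa [Fin.ext_iff] using hxb
        have : Tmat n ε i x = 0 := by
          simp only [Tmat, Fin.val_mk]; split_ifs <;> first | rfl | omega
        rw [this, zero_mul]

lemma eig0_h0 (ε : ℝ) (n : ℕ) :
    Real.exp ε * (tsacVec n ε 0 0 + tsacVec n ε 0 1) =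
      tsacLam n ε 0 * ((Real.exp ε + Real.exp (-ε)) * tsacVec n ε 0 0) := by
  simp [tsacVec, tsacLam]
  have h2 : Real.exp (-(2 * ε)) = Real.exp (-ε) * Real.exp (-ε) := by
    rw [← Real.exp_add]; congr 1; ring
  have h1 : Real.exp ε * Real.exp (-ε) = 1 := by
    rw [← Real.exp_add]; simp
  rw [h2]
  linear_combination Real.exp (-ε) * h1

lemma eig0_mid (ε : ℝ) (n : ℕ) (m : ℕ) :
    Real.exp (-ε) * tsacVec n ε 0 m + Real.exp ε * tsacVec n ε 0 (m + 2) =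
      tsacLam n ε 0 * ((Real.exp ε + Real.exp (-ε)) * tsacVec n ε 0 (m + 1)) := by
  simp only [tsacVec, tsacLam, if_pos rfl, one_mul]
  push_cast
  have E1 : Real.exp (-(2 * ε) * ((m : ℝ) + 1))
      = Real.exp (-(2 * ε) * m) * Real.exp (-ε) ^ 2 := by
    rw [show (-(2 * ε) * ((m : ℝ) + 1)) = -(2 * ε) * m + (-ε + -ε) by ring,
      Real.exp_add, Real.exp_add]; ring
  have E2 : Real.exp (-(2 * ε) * ((m : ℝ) + 2))
      = Real.exp (-(2 * ε) * m) * Real.exp (-ε) ^ 4 := by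
    rw [show (-(2 * ε) * ((m : ℝ) + 2)) = -(2 * ε) * m + (-ε + (-ε + (-ε + -ε))) by ring,
      Real.exp_add, Real.exp_add, Real.exp_add, Real.exp_add]; ring
  rw [E1, E2, Real.exp_neg]
  have ha := Real.exp_ne_zero ε
  field_simp

lemma eig0_top (ε : ℝ) (n : ℕ) (m : ℕ) :
    Real.exp (-ε) * (tsacVec n ε 0 m + tsacVec n ε 0 (m + 1)) =
      tsacLam n ε 0 * ((Real.exp ε + Real.exp (-ε)) * tsacVec n ε 0 (m + 1)) := by
  simp only [tsacVec, tsacLam, if_pos rfl, one_mul]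
  push_cast
  have E1 : Real.exp (-(2 * ε) * ((m : ℝ) + 1))
      = Real.exp (-(2 * ε) * m) * Real.exp (-ε) ^ 2 := by
    rw [show (-(2 * ε) * ((m : ℝ) + 1)) = -(2 * ε) * m + (-ε + -ε) by ring,
      Real.exp_add, Real.exp_add]; ring
  rw [E1, Real.exp_neg]
  have ha := Real.exp_ne_zero ε
  field_simp

lemma eigk_h0 (ε : ℝ) (n : ℕ) (k : ℕ) (hk0 : k ≠ 0) :
    Real.exp ε * (tsacVec n ε k 0 + tsacVec n ε k 1) =
      tsacLam n ε k * ((Real.exp ε + Real.exp (-ε)) * tsacVec n ε k 0) := by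
  have hz : Real.exp ε + Real.exp (-ε) ≠ 0 := by positivity
  set θ : ℝ := (k : ℝ) * Real.pi / 2 ^ n with hθ
  simp only [tsacVec, tsacLam, if_neg hk0]
  norm_num
  rw [Real.sin_two_mul, Real.exp_neg]
  have ha := Real.exp_ne_zero ε
  field_simp
  ring

lemma eigk_mid (ε : ℝ) (n : ℕ) (k : ℕ) (hk0 : k ≠ 0) (m : ℕ) :
    Real.exp (-ε) * tsacVec n ε k m + Real.exp ε * tsacVec n ε k (m + 2) =
      tsacLam n ε k * ((Real.exp ε + Real.exp (-ε)) * tsacVec n ε k (m + 1)) := by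
  have hz : Real.exp ε + Real.exp (-ε) ≠ 0 := by positivity
  set θ : ℝ := (k : ℝ) * Real.pi / 2 ^ n with hθ
  simp only [tsacVec, tsacLam, if_neg hk0]
  push_cast
  rw [show ((m:ℝ) + 1 + 1) = (m:ℝ) + 2 by ring]
  have A1 : Real.sin (((m:ℝ) + 2 + 1) * θ)
      = 2 * Real.sin (((m:ℝ) + 2) * θ) * Real.cos θ - Real.sin (((m:ℝ) + 1) * θ) := by
    have h := sin_helper (((m:ℝ) + 2) * θ) θ
    rw [show ((m:ℝ) + 2) * θ + θ = ((m:ℝ) + 2 + 1) * θ by ring,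
      show ((m:ℝ) + 2) * θ - θ = ((m:ℝ) + 1) * θ by ring] at h
    linarith
  have A0 : Real.sin ((m:ℝ) * θ)
      = 2 * Real.sin (((m:ℝ) + 1) * θ) * Real.cos θ - Real.sin (((m:ℝ) + 2) * θ) := by
    have h := sin_helper (((m:ℝ) + 1) * θ) θ
    rw [show ((m:ℝ) + 1) * θ + θ = ((m:ℝ) + 2) * θ by ring,
      show ((m:ℝ) + 1) * θ - θ = (m:ℝ) * θ by ring] at h
    linarith
  have E1 : Real.exp (-ε * ((m:ℝ) + 1)) = Real.exp (-ε * m) * Real.exp (-ε) := by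
    rw [show -ε * ((m:ℝ) + 1) = -ε * m + -ε by ring, Real.exp_add]
  have E2 : Real.exp (-ε * ((m:ℝ) + 2)) = Real.exp (-ε * m) * Real.exp (-ε) ^ 2 := by
    rw [show -ε * ((m:ℝ) + 2) = -ε * m + (-ε + -ε) by ring, Real.exp_add, Real.exp_add]; ring
  rw [A1, A0, E1, E2, Real.exp_neg]
  have ha := Real.exp_ne_zero ε
  simp only [← hθ]
  field_simp
  ring

lemma eigk_top (ε : ℝ) (n : ℕ) (k : ℕ) (hk0 : k ≠ 0) (m : ℕ)
    (hsin : Real.sin (((m:ℝ) + 2) * ((k : ℝ) * Real.pi / 2 ^ n)) = 0) :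
    Real.exp (-ε) * (tsacVec n ε k m + tsacVec n ε k (m + 1)) =
      tsacLam n ε k * ((Real.exp ε + Real.exp (-ε)) * tsacVec n ε k (m + 1)) := by
  have hz : Real.exp ε + Real.exp (-ε) ≠ 0 := by positivity
  set θ : ℝ := (k : ℝ) * Real.pi / 2 ^ n with hθ
  simp only [tsacVec, tsacLam, if_neg hk0]
  push_cast
  rw [show ((m:ℝ) + 1 + 1) = (m:ℝ) + 2 by ring]
  have A0 : Real.sin ((m:ℝ) * θ)
      = 2 * Real.sin (((m:ℝ) + 1) * θ) * Real.cos θ - Real.sin (((m:ℝ) + 2) * θ) := by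
    have h := sin_helper (((m:ℝ) + 1) * θ) θ
    rw [show ((m:ℝ) + 1) * θ + θ = ((m:ℝ) + 2) * θ by ring,
      show ((m:ℝ) + 1) * θ - θ = (m:ℝ) * θ by ring] at h
    linarith
  have E1 : Real.exp (-ε * ((m:ℝ) + 1)) = Real.exp (-ε * m) * Real.exp (-ε) := by
    rw [show -ε * ((m:ℝ) + 1) = -ε * m + -ε by ring, Real.exp_add]
  rw [A0, E1, hsin, Real.exp_neg]
  have ha := Real.exp_ne_zero ε
  simp only [← hθ]
  field_simp
  ring

lemma tsac_eigen (n : ℕ) (hn : 1 ≤ n) (ε : ℝ) (k : ℕ) :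
    ∀ i : Fin (2 ^ n), (Tmat n ε).mulVec (fun j => tsacVec n ε k j.val) i
      = tsacLam n ε k * tsacVec n ε k i.val := by
  have hN : 2 ≤ 2 ^ n := by
    calc 2 = 2 ^ 1 := rfl
    _ ≤ 2 ^ n := Nat.pow_le_pow_right (by norm_num) hn
  apply tmat_row n hn
  · rcases eq_or_ne k 0 with rfl | hk0
    · exact eig0_h0 ε n
    · exact eigk_h0 ε n k hk0
  · intro m _
    rcases eq_or_ne k 0 with rfl | hk0
    · exact eig0_mid ε n m
    · exact eigk_mid ε n k hk0 m
  · rw [show 2^n - 1 = (2^n - 2) + 1 by omega]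
    rcases eq_or_ne k 0 with rfl | hk0
    · exact eig0_top ε n (2^n - 2)
    · refine eigk_top ε n k hk0 (2^n - 2) ?_
      have hc : ((2^n - 2 : ℕ) : ℝ) + 2 = (2:ℝ)^n := by
        rw [Nat.cast_sub hN]; push_cast; ring
      rw [hc]
      have h2 : ((2:ℝ)^n) ≠ 0 := by positivity
      rw [show (2:ℝ)^n * ((k:ℝ) * Real.pi / 2^n) = (k:ℝ) * Real.pi by field_simp]
      exact Real.sin_nat_mul_pi k

lemma tsacVec_zero_ne (n : ℕ) (hn : 1 ≤ n) (ε : ℝ) (k : ℕ) (hk : k ≤ 2^n - 1) :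
    tsacVec n ε k 0 ≠ 0 := by
  rcases eq_or_ne k 0 with rfl | hk0
  · simp [tsacVec]
  · have hN : 2 ≤ 2 ^ n := by
      calc 2 = 2 ^ 1 := rfl
      _ ≤ 2 ^ n := Nat.pow_le_pow_right (by norm_num) hn
    have hπ := Real.pi_pos
    have hk1 : 0 < (k:ℝ) := by exact_mod_cast Nat.pos_of_ne_zero hk0
    have h1 : 0 < (k:ℝ) * Real.pi / 2^n := by positivity
    have h2 : (k:ℝ) * Real.pi / 2^n < Real.pi := by
      rw [div_lt_iff₀ (by positivity)]
      have hklt : (k:ℝ) < 2^n := by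
        have : k < 2^n := by omega
        exact_mod_cast this
      nlinarith
    have hs : 0 < Real.sin ((k:ℝ) * Real.pi / 2^n) :=
      Real.sin_pos_of_pos_of_lt_pi h1 h2
    have hv : tsacVec n ε k 0 = Real.sin ((k:ℝ) * Real.pi / 2^n) := by
      simp [tsacVec, hk0]
    rw [hv]
    exact ne_of_gt hs

lemma z_gt_two (ε : ℝ) (hε : 0 < ε) : 2 < Real.exp ε + Real.exp (-ε) := by
  have h1 : Real.exp (ε/2) * Real.exp (-(ε/2)) = 1 := by rw [← Real.exp_add]; simp
  have h2 : Real.exp (ε/2) * Real.exp (ε/2) = Real.exp ε := by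
    rw [← Real.exp_add]; congr 1; ring
  have h3 : Real.exp (-(ε/2)) * Real.exp (-(ε/2)) = Real.exp (-ε) := by
    rw [← Real.exp_add]; congr 1; ring
  have h4 : Real.exp (-(ε/2)) < Real.exp (ε/2) := Real.exp_lt_exp.2 (by linarith)
  nlinarith [mul_pos (sub_pos.2 h4) (sub_pos.2 h4)]

lemma lam_ne_one (n : ℕ) (ε : ℝ) (hε : 0 < ε) (k : ℕ) :
    2 * Real.cos ((k:ℝ) * Real.pi / 2 ^ n) / (Real.exp ε + Real.exp (-ε)) ≠ 1 := by
  intro h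
  have hz2 := z_gt_two ε hε
  have hz : (0:ℝ) < Real.exp ε + Real.exp (-ε) := by positivity
  rw [div_eq_one_iff_eq (ne_of_gt hz)] at h
  have hc := Real.cos_le_one ((k:ℝ) * Real.pi / 2 ^ n)
  nlinarith

lemma lam_injOn (n : ℕ) (hn : 1 ≤ n) (ε : ℝ) :
    Set.InjOn (fun k : ℕ => 2 * Real.cos (k * Real.pi / 2 ^ n) / (Real.exp ε + Real.exp (-ε)))
      {k : ℕ | 1 ≤ k ∧ k ≤ 2 ^ n - 1} := by
  intro a ha b hb h
  simp only [Set.mem_setOf_eq] at ha hb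
  have hz : (0:ℝ) < Real.exp ε + Real.exp (-ε) := by positivity
  have hπ := Real.pi_pos
  have hNpos : (0:ℝ) < 2^n := by positivity
  have hN : 2 ≤ 2 ^ n := by
    calc 2 = 2 ^ 1 := rfl
    _ ≤ 2 ^ n := Nat.pow_le_pow_right (by norm_num) hn
  simp only at h
  have hcos : Real.cos ((a:ℝ) * Real.pi / 2^n) = Real.cos ((b:ℝ) * Real.pi / 2^n) := by
    field_simp at h
    rw [mul_comm Real.pi (b:ℝ)] at h
    linarith
  have hmem : ∀ c : ℕ, c ≤ 2^n - 1 → (c:ℝ) * Real.pi / 2^n ∈ Set.Icc 0 Real.pi := by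
    intro c hc
    constructor
    · positivity
    · rw [div_le_iff₀ hNpos]
      have hcle : (c:ℝ) ≤ 2^n := by
        have : c ≤ 2^n := by omega
        exact_mod_cast this
      nlinarith
  have heq := Real.injOn_cos (hmem a ha.2) (hmem b hb.2) hcos
  field_simp at heq
  exact_mod_cast heq

/-- The set of complex eigenvalues of `T` (the spectrum of `T` over `ℂ`) is exactly
`{1} ∪ {2 cos(kπ/N)/z : k = 1, …, N-1}`; these `N` real numbers are pairwise
distinct, and `T` is diagonalizable over `ℝ`. -/
theorem tsac_spectrum (n : ℕ) (hn : 1 ≤ n) (ε : ℝ) (hε : 0 < ε) :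
    spectrum ℂ ((Tmat n ε).map (algebraMap ℝ ℂ)) =
        insert 1 ((fun k : ℕ =>
            ((2 * Real.cos (k * Real.pi / 2 ^ n) / (Real.exp ε + Real.exp (-ε)) : ℝ) : ℂ)) ''
          {k : ℕ | 1 ≤ k ∧ k ≤ 2 ^ n - 1}) ∧
    Set.InjOn (fun k : ℕ => 2 * Real.cos (k * Real.pi / 2 ^ n) / (Real.exp ε + Real.exp (-ε)))
      {k : ℕ | 1 ≤ k ∧ k ≤ 2 ^ n - 1} ∧
    (∀ k : ℕ, 1 ≤ k → k ≤ 2 ^ n - 1 →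
      2 * Real.cos (k * Real.pi / 2 ^ n) / (Real.exp ε + Real.exp (-ε)) ≠ 1) ∧
    ∃ P D : Matrix (Fin (2 ^ n)) (Fin (2 ^ n)) ℝ, IsUnit P.det ∧ D.IsDiag ∧
      Tmat n ε = P * D * P⁻¹ := by
  have hN : 2 ≤ 2 ^ n := by
    calc 2 = 2 ^ 1 := rfl
    _ ≤ 2 ^ n := Nat.pow_le_pow_right (by norm_num) hn
  set P : Matrix (Fin (2^n)) (Fin (2^n)) ℝ := fun i k => tsacVec n ε k.val i.val with hP
  set D : Matrix (Fin (2^n)) (Fin (2^n)) ℝ :=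
    Matrix.diagonal (fun k : Fin (2^n) => tsacLam n ε k.val) with hD
  -- injectivity of the eigenvalue family over Fin
  have hlaminj : Function.Injective (fun k : Fin (2^n) => tsacLam n ε k.val) := by
    intro a b hab
    simp only at hab
    have hale : (a:ℕ) ≤ 2^n - 1 := by have := a.isLt; omega
    have hble : (b:ℕ) ≤ 2^n - 1 := by have := b.isLt; omega
    rcases eq_or_ne (a:ℕ) 0 with ha | ha <;> rcases eq_or_ne (b:ℕ) 0 with hb | hb
    · exact Fin.ext (by rw [ha, hb])
    · exfalso
      rw [tsacLam, tsacLam, if_pos ha, if_neg hb] at hab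
      exact lam_ne_one n ε hε b hab.symm
    · exfalso
      rw [tsacLam, tsacLam, if_neg ha, if_pos hb] at hab
      exact lam_ne_one n ε hε a hab
    · refine Fin.ext (lam_injOn n hn ε ⟨Nat.one_le_iff_ne_zero.2 ha, hale⟩
        ⟨Nat.one_le_iff_ne_zero.2 hb, hble⟩ ?_)
      rw [tsacLam, tsacLam, if_neg ha, if_neg hb] at hab
      simpa using hab
  -- eigenvector property
  have heig : ∀ k : Fin (2^n), Module.End.HasEigenvector (Matrix.mulVecLin (Tmat n ε))
      (tsacLam n ε k.val) (fun i : Fin (2^n) => tsacVec n ε k.val i.val) := by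
    intro k
    constructor
    · rw [Module.End.mem_eigenspace_iff]
      funext i
      simp only [Matrix.mulVecLin_apply, Pi.smul_apply, smul_eq_mul]
      exact tsac_eigen n hn ε k.val i
    · intro hzero
      have h0 := congrFun hzero ⟨0, by omega⟩
      exact tsacVec_zero_ne n hn ε k.val (by have := k.isLt; omega) h0
  -- P is invertible
  have hPunit : IsUnit P := by
    rw [← Matrix.linearIndependent_cols_iff_isUnit]
    have hli := Module.End.eigenvectors_linearIndependent' (Matrix.mulVecLin (Tmat n ε))
      (fun k : Fin (2^n) => tsacLam n ε k.val) hlaminj _ heig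
    convert hli using 1
    all_goals rfl
  have hdet : IsUnit P.det := (Matrix.isUnit_iff_isUnit_det P).1 hPunit
  -- T * P = P * D
  have hTP : Tmat n ε * P = P * D := by
    ext i k
    rw [Matrix.mul_apply, hD, Matrix.mul_diagonal]
    have h := tsac_eigen n hn ε k.val i
    simp only [Matrix.mulVec, dotProduct] at h
    exact h.trans (mul_comm _ _)
  -- decomposition over ℝ
  have hPP : P * P⁻¹ = 1 := Matrix.mul_nonsing_inv P hdet
  have hdecomp : Tmat n ε = P * D * P⁻¹ := by
    calc Tmat n ε = Tmat n ε * (P * P⁻¹) := by rw [hPP, mul_one]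
    _ = (Tmat n ε * P) * P⁻¹ := by rw [Matrix.mul_assoc]
    _ = P * D * P⁻¹ := by rw [hTP]
  refine ⟨?_, lam_injOn n hn ε, fun k hk1 hk2 => lam_ne_one n ε hε k, P, D, hdet,
    Matrix.isDiag_diagonal _, hdecomp⟩
  -- spectrum computation
  have hTPc : (Tmat n ε).map (algebraMap ℝ ℂ) * P.map (algebraMap ℝ ℂ)
      = P.map (algebraMap ℝ ℂ) * D.map (algebraMap ℝ ℂ) := by
    rw [← Matrix.map_mul, ← Matrix.map_mul, hTP]
  have hPcUnit : IsUnit (P.map (algebraMap ℝ ℂ)) := by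
    rw [Matrix.isUnit_iff_isUnit_det, ← RingHom.mapMatrix_apply, ← RingHom.map_det]
    exact hdet.map _
  obtain ⟨u, hu⟩ := hPcUnit
  have key : (Tmat n ε).map (algebraMap ℝ ℂ)
      = (↑u : Matrix (Fin (2^n)) (Fin (2^n)) ℂ) * D.map (algebraMap ℝ ℂ) * (↑u⁻¹ : Matrix (Fin (2^n)) (Fin (2^n)) ℂ) := by
    rw [Units.eq_mul_inv_iff_mul_eq, hu]
    exact hTPc
  rw [key, spectrum.units_conjugate]
  have hDmap : D.map (algebraMap ℝ ℂ)
      = Matrix.diagonal (fun k : Fin (2^n) => ((tsacLam n ε k.val : ℝ) : ℂ)) := by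
    rw [hD, Matrix.diagonal_map (map_zero _)]
    simp only [Complex.coe_algebraMap]
  rw [hDmap, spectrum_diagonal]
  ext x
  simp only [Set.mem_range, Set.mem_insert_iff, Set.mem_image, Set.mem_setOf_eq]
  constructor
  · rintro ⟨k, rfl⟩
    rcases eq_or_ne (k:ℕ) 0 with hk | hk
    · left; rw [tsacLam, if_pos hk]; norm_num
    · right
      refine ⟨k.val, ⟨Nat.one_le_iff_ne_zero.2 hk, by have := k.isLt; omega⟩, ?_⟩
      rw [tsacLam, if_neg hk]
  · rintro (rfl | ⟨m, ⟨hm1, hm2⟩, rfl⟩)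
    · refine ⟨⟨0, by omega⟩, ?_⟩
      rw [tsacLam]
      norm_num
    · refine ⟨⟨m, by omega⟩, ?_⟩
      rw [tsacLam, if_neg (by simpa using Nat.one_le_iff_ne_zero.1 hm1)]
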